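/- Consider a finite decision space Θ and the set-valued learning algorithm 𝔸(z_1,...,z_k) := {θ ∈ Θ : (1/k)Σ_{i=1}^k l(θ,z_i) ≤ min_{θ'∈Θ} (1/k)Σ_{i=1}^k l(θ',z_i) + ε} for a fixed ε ≥ 0, with p_k(θ) := P(θ ∈ 𝔸(z_1,...,z_k)). Then for every δ ≥ 0 with ε < δ: (i) max_{θ∈Θ} p_k(θ) ≥ 1 − T_k(ε/2); (ii) max_{θ∈Θ∖Θ^δ} p_k(θ) ≤ T_k((δ−ε)/2); and hence (iii) η̄_{k,δ} := max_{θ∈Θ} p_k(θ) − max_{θ∈Θ∖Θ^δ} p_k(θ) ≥ 1 − T_k(ε/2) − T_k((δ−ε)/2). -/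

import Mathlib

set_option autoImplicit false

open MeasureTheory ProbabilityTheory Real
open scoped ENNReal Classical

/-- **Bounds on the generalization sensitivity for the ε-optimality vote (Lemma 8).**
For a finite decision space `Θ` and the set-valued learner
`𝔸(z_1,…,z_k) = {θ : (1/k)Σᵢ l(θ,zᵢ) ≤ min_{θ'} (1/k)Σᵢ l(θ',zᵢ) + ε}` with `ε ≥ 0`,
and `T_k(t) = P(sup_θ |(1/k)Σᵢ l(θ,zᵢ) − L(θ)| > t)`, for every `δ ≥ 0` with `ε < δ`:
(i) `max_θ p_k(θ) ≥ 1 − T_k(ε/2)`, (ii) `max_{θ∈Θ∖Θ^δ} p_k(θ) ≤ T_k((δ−ε)/2)`,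
hence (iii) `η̄_{k,δ} ≥ 1 − T_k(ε/2) − T_k((δ−ε)/2)`. -/
theorem eps_optimality_vote_sensitivity_bounds
    {Ω Z Θ : Type*} [MeasurableSpace Ω] [MeasurableSpace Z]
    [Fintype Θ] [Nonempty Θ]
    (μ : Measure Ω) [IsProbabilityMeasure μ]
    (ν : Measure Z) [IsProbabilityMeasure ν]
    (z : ℕ → Ω → Z) (hzm : ∀ i, Measurable (z i))
    (hindep : iIndepFun z μ)
    (hid : ∀ i, Measure.map (z i) μ = ν)
    (l : Θ → Z → ℝ) (L : Θ → ℝ) (hL : ∀ θ, L θ = ∫ x, l θ x ∂ν)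
    (k : ℕ) (hk : 0 < k)
    -- the empirical objective on the first `k` data points
    (emp : Θ → Ω → ℝ)
    (hemp : ∀ θ ω, emp θ ω = (k : ℝ)⁻¹ * ∑ i ∈ Finset.range k, l θ (z i ω))
    -- `p_k(θ) = P(θ ∈ 𝔸(z_1,…,z_k))`, i.e. the probability that `θ` is `ε`-optimal
    (ε : ℝ) (hε : 0 ≤ ε)
    (pk : Θ → ℝ≥0∞)
    (hpk : ∀ θ, pk θ = μ {ω | emp θ ω ≤ (⨅ θ' : Θ, emp θ' ω) + ε})
    -- the tail function of the maximal empirical deviation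
    (T : ℝ → ℝ)
    (hT : ∀ t, T t = (μ {ω | (⨆ θ : Θ, |emp θ ω - L θ|) > t}).toReal)
    (δ : ℝ) (hδ : 0 ≤ δ) (hεδ : ε < δ) :
    ((Finset.univ.sup pk).toReal ≥ 1 - T (ε / 2)) ∧
    (((Finset.univ.filter fun θ => L θ > (⨅ θ' : Θ, L θ') + δ).sup pk).toReal ≤
      T ((δ - ε) / 2)) ∧
    ((Finset.univ.sup pk).toReal -
        ((Finset.univ.filter fun θ => L θ > (⨅ θ' : Θ, L θ') + δ).sup pk).toReal ≥
      1 - T (ε / 2) - T ((δ - ε) / 2)) := by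
  classical
  -- minimizer of L
  obtain ⟨θs, hθs⟩ := Finite.exists_min L
  have hLinf : L θs = ⨅ θ' : Θ, L θ' :=
    le_antisymm (le_ciInf hθs) (ciInf_le (Finite.bddBelow_range _) θs)
  -- general facts
  have hpk_le_one : ∀ θ, pk θ ≤ 1 := fun θ => by
    rw [hpk]; exact prob_le_one
  have hsup_le_one : Finset.univ.sup pk ≤ 1 := Finset.sup_le fun θ _ => hpk_le_one θ
  -- the bad events
  set G1 : Set Ω := {ω | (⨆ θ : Θ, |emp θ ω - L θ|) > ε / 2} with hG1
  set G2 : Set Ω := {ω | (⨆ θ : Θ, |emp θ ω - L θ|) > (δ - ε) / 2} with hG2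
  have hdev : ∀ (t : ℝ) (ω : Ω), ¬ ((⨆ θ : Θ, |emp θ ω - L θ|) > t) →
      ∀ θ : Θ, |emp θ ω - L θ| ≤ t := by
    intro t ω hω θ
    push_neg at hω
    exact le_trans (le_ciSup (f := fun θ : Θ => |emp θ ω - L θ|) (Finite.bddAbove_range _) θ) hω
  -- Part (i)
  have hsub1 : G1ᶜ ⊆ {ω | emp θs ω ≤ (⨅ θ' : Θ, emp θ' ω) + ε} := by
    intro ω hω
    have hdev1 := hdev (ε / 2) ω hω
    have h1 : emp θs ω - ε ≤ ⨅ θ' : Θ, emp θ' ω := by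
      apply le_ciInf
      intro θ'
      have ha := abs_le.mp (hdev1 θs)
      have hb := abs_le.mp (hdev1 θ')
      have := hθs θ'
      linarith [ha.1, ha.2, hb.1, hb.2]
    simp only [Set.mem_setOf_eq]
    linarith
  have hi_ennreal : (1 : ℝ≥0∞) ≤ μ G1 + Finset.univ.sup pk := by
    calc (1 : ℝ≥0∞) = μ Set.univ := (measure_univ).symm
    _ = μ (G1 ∪ G1ᶜ) := by rw [Set.union_compl_self]
    _ ≤ μ G1 + μ G1ᶜ := measure_union_le _ _
    _ ≤ μ G1 + Finset.univ.sup pk := by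
        gcongr
        calc μ G1ᶜ ≤ μ {ω | emp θs ω ≤ (⨅ θ' : Θ, emp θ' ω) + ε} := measure_mono hsub1
        _ = pk θs := (hpk θs).symm
        _ ≤ Finset.univ.sup pk := Finset.le_sup (Finset.mem_univ θs)
  have hi : (Finset.univ.sup pk).toReal ≥ 1 - T (ε / 2) := by
    have hG1le : μ G1 ≤ 1 := prob_le_one
    have hfin : μ G1 + Finset.univ.sup pk ≠ ∞ := by
      apply ne_of_lt
      calc μ G1 + Finset.univ.sup pk ≤ 1 + 1 := add_le_add hG1le hsup_le_one
      _ < ∞ := by simp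
    have := ENNReal.toReal_le_toReal (by simp) hfin |>.mpr hi_ennreal
    rw [ENNReal.toReal_add (ne_top_of_le_ne_top (by simp) hG1le)
      (ne_top_of_le_ne_top (by simp) hsup_le_one)] at this
    rw [hT]
    simp only [ENNReal.toReal_one] at this
    linarith
  -- Part (ii)
  have hsub2 : ∀ θ : Θ, L θ > (⨅ θ' : Θ, L θ') + δ →
      {ω | emp θ ω ≤ (⨅ θ' : Θ, emp θ' ω) + ε} ⊆ G2 := by
    intro θ hθ ω hω
    simp only [Set.mem_setOf_eq] at hω
    by_contra hωG
    have hdev2 := hdev ((δ - ε) / 2) ω hωG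
    have ha := abs_le.mp (hdev2 θ)
    have hb := abs_le.mp (hdev2 θs)
    have hinf_emp : (⨅ θ' : Θ, emp θ' ω) ≤ emp θs ω :=
      ciInf_le (Finite.bddBelow_range _) θs
    rw [← hLinf] at hθ
    -- emp θ ω ≥ L θ - (δ-ε)/2 > L θs + δ - (δ-ε)/2 = L θs + (δ+ε)/2
    -- inf emp + ε ≤ emp θs ω + ε ≤ L θs + (δ-ε)/2 + ε = L θs + (δ+ε)/2
    linarith [ha.1, ha.2, hb.1, hb.2]
  have hii_ennreal : (Finset.univ.filter fun θ => L θ > (⨅ θ' : Θ, L θ') + δ).sup pk ≤ μ G2 := by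
    apply Finset.sup_le
    intro θ hθ
    rw [Finset.mem_filter] at hθ
    rw [hpk]
    exact measure_mono (hsub2 θ hθ.2)
  have hii : ((Finset.univ.filter fun θ => L θ > (⨅ θ' : Θ, L θ') + δ).sup pk).toReal ≤
      T ((δ - ε) / 2) := by
    rw [hT]
    exact ENNReal.toReal_mono (ne_top_of_le_ne_top (by simp) (prob_le_one)) hii_ennreal
  exact ⟨hi, hii, by linarith⟩
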